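/- The state ρ_V(ν) = ν ρ_V + (1-ν) ρ_top, where ρ_V = (1/4)[I₄ + (1/2)(σ_z⊗I + I⊗σ_z) + (1/2)(σ_x⊗σ_x + σ_y⊗σ_y)] and ρ_top = (|00⟩⟨00|+|11⟩⟨11|)/2, has partial-transpose eigenvalues ν/4 (twice) and (2 - ν(1±√2))/4; consequently ρ_V(ν) is entangled (has non-positive partial transpose) if and only if ν > 2(√2 - 1). -/

import Mathlib

open Matrix Kronecker Complex
open scoped ComplexOrder

noncomputable section

/-- Pauli matrices -/
def pauli : Fin 3 → Matrix (Fin 2) (Fin 2) ℂ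
  | 0 => !![0, 1; 1, 0]
  | 1 => !![0, -Complex.I; Complex.I, 0]
  | 2 => !![1, 0; 0, -1]

/-- The singlet Bell state |Ψ⁻⟩ = (|01⟩ - |10⟩)/√2 as a vector in ℂ²⊗ℂ². -/
def psiMinus : Fin 2 × Fin 2 → ℂ :=
  fun p => if p = (0, 1) then (1 / Real.sqrt 2 : ℝ) else
           if p = (1, 0) then (-(1 / Real.sqrt 2) : ℝ) else 0

/-- Outer product |v⟩⟨v|. -/
def outer {n : Type*} (v : n → ℂ) : Matrix n n ℂ :=
  fun i j => v i * starRingEnd ℂ (v j)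

/-- The Werner state ρ_W(α) = α|Ψ⁻⟩⟨Ψ⁻| + (1-α)/4 · I₄. -/
def wernerState (α : ℝ) : Matrix (Fin 2 × Fin 2) (Fin 2 × Fin 2) ℂ :=
  (α : ℂ) • outer psiMinus + (((1 - α) / 4 : ℝ) : ℂ) • (1 : Matrix (Fin 2 × Fin 2) (Fin 2 × Fin 2) ℂ)

/-- Partial trace over the first subsystem. -/
def ptrA {m n : Type*} [Fintype m] (ρ : Matrix (m × n) (m × n) ℂ) : Matrix n n ℂ :=
  fun i j => ∑ k, ρ (k, i) (k, j)

/-- Partial trace over the second subsystem. -/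
def ptrB {m n : Type*} [Fintype n] (ρ : Matrix (m × n) (m × n) ℂ) : Matrix m m ℂ :=
  fun i j => ∑ k, ρ (i, k) (j, k)

/-- Partial transpose on the second subsystem. -/
def ptransposeB {m n : Type*} (ρ : Matrix (m × n) (m × n) ℂ) : Matrix (m × n) (m × n) ℂ :=
  fun p q => ρ (p.1, q.2) (q.1, p.2)

/-- A density operator: positive semi-definite with unit trace. -/
def IsDensityOp {n : Type*} [Fintype n] [DecidableEq n] (ρ : Matrix n n ℂ) : Prop :=
  ρ.PosSemidef ∧ ρ.trace = 1

/-- Separability of a bipartite state: a convex combination of product density operators. -/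
def IsSepState {m n : Type*} [Fintype m] [Fintype n] [DecidableEq m] [DecidableEq n]
    (ρ : Matrix (m × n) (m × n) ℂ) : Prop :=
  ∃ (k : ℕ) (p : Fin k → ℝ) (A : Fin k → Matrix m m ℂ) (B : Fin k → Matrix n n ℂ),
    (∀ i, 0 ≤ p i) ∧ (∑ i, p i = 1) ∧
    (∀ i, IsDensityOp (A i)) ∧ (∀ i, IsDensityOp (B i)) ∧
    ρ = ∑ i, ((p i : ℂ)) • (A i ⊗ₖ B i)

/-- A Hermitian matrix has a negative eigenvalue. -/
def HasNegEigenvalue {n : Type*} [Fintype n] [DecidableEq n] (M : Matrix n n ℂ) : Prop :=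
  ∃ (h : M.IsHermitian) (i : n), h.eigenvalues i < 0

/-- Von Neumann entropy (base-2) of a matrix, via its eigenvalues (0 for non-Hermitian input). -/
def vNEntropy {n : Type*} [Fintype n] [DecidableEq n] (ρ : Matrix n n ℂ) : ℝ :=
  if h : ρ.IsHermitian then ∑ i, -(h.eigenvalues i) * Real.logb 2 (h.eigenvalues i) else 0


/-- Weyl (locally maximally mixed) two-qubit state with correlation coefficients t. -/
def weylState (t : Fin 3 → ℝ) : Matrix (Fin 2 × Fin 2) (Fin 2 × Fin 2) ℂ :=
  (1/4 : ℂ) • ((1 : Matrix (Fin 2 × Fin 2) (Fin 2 × Fin 2) ℂ) +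
    ∑ i, (t i : ℂ) • (pauli i ⊗ₖ pauli i))

/-- Matrix function via the continuous functional calculus (0 for non-Hermitian input). -/
def mfun {n : Type*} [Fintype n] [DecidableEq n] (f : ℝ → ℝ) (M : Matrix n n ℂ) :
    Matrix n n ℂ :=
  if h : M.IsHermitian then h.cfc f else 0

/-- Base-2 logarithm extended by 0 outside the support. -/
def log2supp (x : ℝ) : ℝ := if 0 < x then Real.logb 2 x else 0

/-- The Cerf–Adami conditional amplitude operator ρ_{A|B} = exp₂(log₂ ρ - log₂ (1 ⊗ ρ_B)). -/
def condAmpOp {m n : Type*} [Fintype m] [Fintype n] [DecidableEq m] [DecidableEq n]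
    (ρ : Matrix (m × n) (m × n) ℂ) : Matrix (m × n) (m × n) ℂ :=
  mfun (fun x => (2 : ℝ) ^ x)
    (mfun log2supp ρ - mfun log2supp ((1 : Matrix m m ℂ) ⊗ₖ ptrA ρ))

/-- The spin-flipped state σ_y⊗σ_y ρ* σ_y⊗σ_y. -/
def spinFlip (ρ : Matrix (Fin 2 × Fin 2) (Fin 2 × Fin 2) ℂ) :
    Matrix (Fin 2 × Fin 2) (Fin 2 × Fin 2) ℂ :=
  (pauli 1 ⊗ₖ pauli 1) * ρ.map (starRingEnd ℂ) * (pauli 1 ⊗ₖ pauli 1)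

/-- The Wootters concurrence of a two-qubit state ρ equals c: the λᵢ are the decreasingly
ordered (nonnegative) eigenvalues of ρ ρ̃ and c = max{0, √λ₁ - √λ₂ - √λ₃ - √λ₄}. -/
def ConcurrenceEq (ρ : Matrix (Fin 2 × Fin 2) (Fin 2 × Fin 2) ℂ) (c : ℝ) : Prop :=
  ∃ l : Fin 4 → ℝ, Antitone l ∧ (∀ i, 0 ≤ l i) ∧
    (ρ * spinFlip ρ).charpoly = ∏ i : Fin 4, (Polynomial.X - Polynomial.C ((l i : ℝ) : ℂ)) ∧
    c = max 0 (Real.sqrt (l 0) - Real.sqrt (l 1) - Real.sqrt (l 2) - Real.sqrt (l 3))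

/-- The state |ψ_θ⟩ = sin θ |01⟩ + cos θ |10⟩. -/
def psiTheta (θ : ℝ) : Fin 2 × Fin 2 → ℂ :=
  fun p => if p = (0, 1) then (Real.sin θ : ℝ) else
           if p = (1, 0) then (Real.cos θ : ℝ) else 0

/-- The state ρ_top = (|00⟩⟨00| + |11⟩⟨11|)/2. -/
def rhoTop : Matrix (Fin 2 × Fin 2) (Fin 2 × Fin 2) ℂ :=
  Matrix.diagonal (fun p => if p.1 = p.2 then (1/2 : ℂ) else 0)

/-- The Gisin state ρ_G(λ,θ) = λ|ψ_θ⟩⟨ψ_θ| + (1-λ) ρ_top. -/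
def gisinState (lam θ : ℝ) : Matrix (Fin 2 × Fin 2) (Fin 2 × Fin 2) ℂ :=
  (lam : ℂ) • outer (psiTheta θ) + ((1 - lam : ℝ) : ℂ) • rhoTop

/-- The Bell state |Ψ⁺⟩ = (|01⟩ + |10⟩)/√2. -/
def psiPlus : Fin 2 × Fin 2 → ℂ :=
  fun p => if p = (0, 1) then (1 / Real.sqrt 2 : ℝ) else
           if p = (1, 0) then (1 / Real.sqrt 2 : ℝ) else 0

/-- The entanglement witness W = (1/(2√3))(I + ∑ σₙ⊗σₙ). -/
def witnessW : Matrix (Fin 2 × Fin 2) (Fin 2 × Fin 2) ℂ :=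
  ((1 / (2 * Real.sqrt 3) : ℝ) : ℂ) •
    ((1 : Matrix (Fin 2 × Fin 2) (Fin 2 × Fin 2) ℂ) + ∑ i, pauli i ⊗ₖ pauli i)

/-- The maximally entangled mixed state ρ_V. -/
def rhoV : Matrix (Fin 2 × Fin 2) (Fin 2 × Fin 2) ℂ :=
  (1/4 : ℂ) • ((1 : Matrix (Fin 2 × Fin 2) (Fin 2 × Fin 2) ℂ) +
    (1/2 : ℂ) • (pauli 2 ⊗ₖ (1 : Matrix (Fin 2) (Fin 2) ℂ) +
                 (1 : Matrix (Fin 2) (Fin 2) ℂ) ⊗ₖ pauli 2) +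
    (1/2 : ℂ) • (pauli 0 ⊗ₖ pauli 0 + pauli 1 ⊗ₖ pauli 1))

/-- The line of states ρ_V(ν) = ν ρ_V + (1-ν) ρ_top. -/
def rhoVnu (ν : ℝ) : Matrix (Fin 2 × Fin 2) (Fin 2 × Fin 2) ℂ :=
  (ν : ℂ) • rhoV + ((1 - ν : ℝ) : ℂ) • rhoTop


namespace RhoVnuAux

open Polynomial

/-- The partial transpose of `rhoVnu`, reindexed to `Fin 4`. -/
def Nmat (ν : ℝ) : Matrix (Fin 4) (Fin 4) ℂ :=
  !![1/2, 0, 0, (ν:ℂ)/4;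
     0, (ν:ℂ)/4, 0, 0;
     0, 0, (ν:ℂ)/4, 0;
     (ν:ℂ)/4, 0, 0, (1-(ν:ℂ))/2]

lemma hN (ν : ℝ) : reindex finProdFinEquiv finProdFinEquiv (ptransposeB (rhoVnu ν)) = Nmat ν := by
  ext i j
  fin_cases i <;> fin_cases j <;>
    norm_num [Nmat, ptransposeB, rhoVnu, rhoV, rhoTop, pauli, Matrix.one_apply,
      Matrix.kroneckerMap_apply, Matrix.diagonal, finProdFinEquiv, Equiv.coe_fn_symm_mk,
      Fin.divNat, Fin.modNat, Fin.ext_iff, Prod.ext_iff] <;> ring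

lemma Nherm (ν : ℝ) : (Nmat ν).IsHermitian := by
  unfold Matrix.IsHermitian
  ext i j
  fin_cases i <;> fin_cases j <;>
    simp [Nmat, Matrix.conjTranspose_apply, Complex.star_def, Complex.conj_ofReal, map_ofNat,
      Matrix.vecHead, Matrix.vecTail]

variable {n : Type*} [Fintype n] [DecidableEq n]

lemma charpoly_diagonal (d : n → ℂ) :
    (Matrix.diagonal d).charpoly = ∏ i, (X - C (d i)) := by
  have h : charmatrix (Matrix.diagonal d) = Matrix.diagonal fun i => X - C (d i) := by
    ext i j
    by_cases hij : i = j
    · subst hij; simp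
    · simp [hij, Matrix.diagonal_apply_ne _ hij]
  rw [Matrix.charpoly, h, Matrix.det_diagonal]

lemma charpoly_conj {U D : Matrix n n ℂ} (hU : U * star U = 1) :
    (U * D * star U).charpoly = D.charpoly := by
  have hscal : Matrix.scalar n (X : ℂ[X]) = (X : ℂ[X]) • (1 : Matrix n n ℂ[X]) := by
    ext i j
    by_cases hij : i = j <;>
      simp [hij, Matrix.scalar_apply, Matrix.diagonal_apply_ne, Matrix.one_apply]
  set f := (RingHom.mapMatrix (C : ℂ →+* ℂ[X]) : Matrix n n ℂ →+* Matrix n n ℂ[X])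
  have key : charmatrix (U * D * star U) = f U * charmatrix D * f (star U) := by
    rw [charmatrix, charmatrix, mul_sub, sub_mul, hscal]
    congr 1
    · rw [mul_smul_comm, smul_mul_assoc, mul_one, ← map_mul f, hU, _root_.map_one f]
    · rw [← map_mul f, ← map_mul f]
  rw [Matrix.charpoly, Matrix.charpoly, key, Matrix.det_mul, Matrix.det_mul]
  have hdet : (f U).det * (f (star U)).det = 1 := by
    rw [← Matrix.det_mul, ← map_mul f, hU, _root_.map_one f, Matrix.det_one]
  calc (f U).det * (charmatrix D).det * (f (star U)).det
      = (charmatrix D).det * ((f U).det * (f (star U)).det) := by ring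
    _ = (charmatrix D).det := by rw [hdet, mul_one]

lemma herm_charpoly {A : Matrix n n ℂ} (hA : A.IsHermitian) :
    A.charpoly = ∏ i, (X - C ((hA.eigenvalues i : ℝ) : ℂ)) := by
  have hU := (Matrix.mem_unitaryGroup_iff).mp (hA.eigenvectorUnitary).2
  conv_lhs => rw [hA.spectral_theorem, Unitary.conjStarAlgAut_apply]
  rw [charpoly_conj hU, charpoly_diagonal]
  rfl

lemma charN (ν : ℝ) :
    (Nmat ν).charpoly =
      (X - C ((ν/4 : ℝ) : ℂ)) * ((X - C ((ν/4 : ℝ) : ℂ)) *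
      ((X - C (((2 - ν*(1 + Real.sqrt 2))/4 : ℝ) : ℂ)) *
       (X - C (((2 - ν*(1 - Real.sqrt 2))/4 : ℝ) : ℂ)))) := by
  have hr2 : Real.sqrt 2 * Real.sqrt 2 = 2 := Real.mul_self_sqrt (by norm_num)
  have hs : ((Real.sqrt 2 : ℝ) : ℂ) * ((Real.sqrt 2 : ℝ) : ℂ) = 2 := by
    exact_mod_cast congrArg (fun x : ℝ => (x : ℂ)) hr2
  have hb : (((2 - ν*(1 + Real.sqrt 2))/4 : ℝ) : ℂ) = (2 - (ν:ℂ)*(1 + ((Real.sqrt 2:ℝ):ℂ)))/4 := by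
    push_cast; ring
  have hc : (((2 - ν*(1 - Real.sqrt 2))/4 : ℝ) : ℂ) = (2 - (ν:ℂ)*(1 - ((Real.sqrt 2:ℝ):ℂ)))/4 := by
    push_cast; ring
  have ha : ((ν/4 : ℝ) : ℂ) = (ν:ℂ)/4 := by push_cast; ring
  rw [ha, hb, hc]
  have hcm : charmatrix (Nmat ν) =
      !![X - C ((2:ℂ)⁻¹), 0, 0, -C ((ν:ℂ)/4);
         0, X - C ((ν:ℂ)/4), 0, 0;
         0, 0, X - C ((ν:ℂ)/4), 0;
         -C ((ν:ℂ)/4), 0, 0, X - C ((1-(ν:ℂ))/2)] := by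
    ext i j : 2
    fin_cases i <;> fin_cases j <;>
      simp [Nmat, charmatrix_apply, Matrix.diagonal, Matrix.vecHead, Matrix.vecTail]
  have hq : (X - C ((2:ℂ)⁻¹)) * (X - C ((1-(ν:ℂ))/2)) - (C ((ν:ℂ)/4))^2 =
      (X - C ((2 - (ν:ℂ)*(1 + ((Real.sqrt 2:ℝ):ℂ)))/4)) *
      (X - C ((2 - (ν:ℂ)*(1 - ((Real.sqrt 2:ℝ):ℂ)))/4)) := by
    have h1 : ((2:ℂ)⁻¹) + (1-(ν:ℂ))/2 =
        (2 - (ν:ℂ)*(1 + ((Real.sqrt 2:ℝ):ℂ)))/4 + (2 - (ν:ℂ)*(1 - ((Real.sqrt 2:ℝ):ℂ)))/4 := by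
      ring
    have h2 : ((2:ℂ)⁻¹) * ((1-(ν:ℂ))/2) - ((ν:ℂ)/4)^2 =
        (2 - (ν:ℂ)*(1 + ((Real.sqrt 2:ℝ):ℂ)))/4 * ((2 - (ν:ℂ)*(1 - ((Real.sqrt 2:ℝ):ℂ)))/4) := by
      linear_combination ((ν:ℂ)^2/16) * hs
    have h1' := congrArg C h1
    have h2' := congrArg C h2
    simp only [map_add, _root_.map_mul, map_sub, map_pow, map_div₀, _root_.map_one,
      map_ofNat] at h1' h2'
    linear_combination (-X) * h1' + h2'
  rw [Matrix.charpoly, hcm]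
  simp [Matrix.det_succ_row_zero, Fin.sum_univ_succ, Matrix.cons_val_zero, Matrix.cons_val_one,
    Matrix.head_cons, Matrix.cons_val_succ, Fin.castSucc, Fin.castAdd, Fin.castLE,
    show (Fin.succAbove (3 : Fin 4) (2 : Fin 3)) = 2 from rfl]
  linear_combination (X - C ((ν:ℂ)/4)) * (X - C ((ν:ℂ)/4)) * hq

end RhoVnuAux

/-- The partial transpose of ρ_V(ν) has eigenvalues ν/4 (twice) and (2 - ν(1±√2))/4;
consequently ρ_V(ν) is entangled iff ν > 2(√2 - 1). -/
theorem rhoVnu_ppt_spectrum_and_entanglement (ν : ℝ) (hν : 0 ≤ ν ∧ ν ≤ 1) :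
    (∀ h : (ptransposeB (rhoVnu ν)).IsHermitian,
      Finset.univ.val.map h.eigenvalues =
        (ν/4) ::ₘ (ν/4) ::ₘ ((2 - ν*(1 + Real.sqrt 2))/4) ::ₘ
          {((2 - ν*(1 - Real.sqrt 2))/4)}) ∧
    (¬ (ptransposeB (rhoVnu ν)).PosSemidef ↔ 2 * (Real.sqrt 2 - 1) < ν) := by
  classical
  obtain ⟨hν0, hν1⟩ := hν
  have hr2 : Real.sqrt 2 * Real.sqrt 2 = 2 := Real.mul_self_sqrt (by norm_num)
  have hs1 : (1:ℝ) ≤ Real.sqrt 2 := by nlinarith [Real.sqrt_nonneg 2]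
  set M := ptransposeB (rhoVnu ν) with hMdef
  have hNeq : reindex finProdFinEquiv finProdFinEquiv M = RhoVnuAux.Nmat ν := RhoVnuAux.hN ν
  have hM : M.IsHermitian := by
    have h2 : (M.submatrix ⇑finProdFinEquiv.symm ⇑finProdFinEquiv.symm).IsHermitian := by
      rw [show M.submatrix ⇑finProdFinEquiv.symm ⇑finProdFinEquiv.symm
          = reindex finProdFinEquiv finProdFinEquiv M from rfl, hNeq]
      exact RhoVnuAux.Nherm ν
    exact (Matrix.isHermitian_submatrix_equiv finProdFinEquiv.symm).mp h2
  have hcpM : M.charpoly =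
      (((((ν/4:ℝ):ℂ) ::ₘ ((ν/4:ℝ):ℂ) ::ₘ (((2 - ν*(1 + Real.sqrt 2))/4:ℝ):ℂ) ::ₘ
        {(((2 - ν*(1 - Real.sqrt 2))/4:ℝ):ℂ)}).map
        fun a => Polynomial.X - Polynomial.C a).prod) := by
    rw [← Matrix.charpoly_reindex finProdFinEquiv M, hNeq, RhoVnuAux.charN ν]
    simp [Multiset.map_cons, Multiset.map_singleton, Multiset.prod_cons, Multiset.prod_singleton]
  have part1 : ∀ h : M.IsHermitian,
      Finset.univ.val.map h.eigenvalues =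
        (ν/4) ::ₘ (ν/4) ::ₘ ((2 - ν*(1 + Real.sqrt 2))/4) ::ₘ
          {((2 - ν*(1 - Real.sqrt 2))/4)} := by
    intro h
    have e1 := RhoVnuAux.herm_charpoly h
    have r1 : M.charpoly.roots = Finset.univ.val.map (fun i => ((h.eigenvalues i : ℝ):ℂ)) := by
      rw [e1, Finset.prod_eq_multiset_prod,
        show (Multiset.map (fun i => Polynomial.X - Polynomial.C ((h.eigenvalues i:ℝ):ℂ))
            Finset.univ.val)
          = ((Finset.univ.val.map fun i => ((h.eigenvalues i:ℝ):ℂ)).map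
            (fun a => Polynomial.X - Polynomial.C a)) from (Multiset.map_map _ _ _).symm]
      exact Polynomial.roots_multiset_prod_X_sub_C _
    have r2 : M.charpoly.roots =
        ((((ν/4:ℝ):ℂ) ::ₘ ((ν/4:ℝ):ℂ) ::ₘ (((2 - ν*(1 + Real.sqrt 2))/4:ℝ):ℂ) ::ₘ
          {(((2 - ν*(1 - Real.sqrt 2))/4:ℝ):ℂ)}) : Multiset ℂ) := by
      rw [hcpM]; exact Polynomial.roots_multiset_prod_X_sub_C _
    have r4 : (Finset.univ.val.map h.eigenvalues).map (fun x:ℝ => (x:ℂ)) =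
        ((ν/4) ::ₘ (ν/4) ::ₘ ((2 - ν*(1 + Real.sqrt 2))/4) ::ₘ
          ({((2 - ν*(1 - Real.sqrt 2))/4)} : Multiset ℝ)).map (fun x:ℝ => (x:ℂ)) := by
      rw [Multiset.map_map]
      simp only [Function.comp]
      rw [← r1, r2]
      simp
    exact Multiset.map_injective Complex.ofReal_injective r4
  refine ⟨part1, ?_⟩
  constructor
  · intro hnps
    by_contra hle
    push_neg at hle
    apply hnps
    apply hM.posSemidef_iff_eigenvalues_nonneg.mpr
    intro i
    simp only [Pi.zero_apply]
    have hmem : hM.eigenvalues i ∈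
        ((ν/4) ::ₘ (ν/4) ::ₘ ((2 - ν*(1 + Real.sqrt 2))/4) ::ₘ
          ({((2 - ν*(1 - Real.sqrt 2))/4)} : Multiset ℝ)) := by
      rw [← part1 hM]
      exact Multiset.mem_map_of_mem _ (Finset.mem_univ i)
    have hb1 : ν * (1 + Real.sqrt 2) ≤ 2 := by
      nlinarith [mul_le_mul_of_nonneg_right hle (show (0:ℝ) ≤ 1 + Real.sqrt 2 by linarith)]
    have hb2 : (0:ℝ) ≤ ν * (Real.sqrt 2 - 1) := mul_nonneg hν0 (by linarith)
    simp only [Multiset.mem_cons, Multiset.mem_singleton] at hmem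
    rcases hmem with h1|h1|h1|h1 <;> rw [h1] <;> nlinarith
  · intro hlt hps
    have hmem : (2 - ν*(1 + Real.sqrt 2))/4 ∈
        ((ν/4) ::ₘ (ν/4) ::ₘ ((2 - ν*(1 + Real.sqrt 2))/4) ::ₘ
          ({((2 - ν*(1 - Real.sqrt 2))/4)} : Multiset ℝ)) := by simp
    rw [← part1 hps.1] at hmem
    obtain ⟨i, -, hi⟩ := Multiset.mem_map.mp hmem
    have hnn := hps.eigenvalues_nonneg i
    rw [hi] at hnn
    nlinarith [mul_lt_mul_of_pos_right hlt (show (0:ℝ) < 1 + Real.sqrt 2 by linarith)]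


end
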